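/- Fix an integer k ≥ 2. Let G be a finite simple graph and X a subset of its vertex set. Suppose the bipartite subgraph of G consisting of exactly those edges with one endpoint in X and one endpoint outside X contains no path on 2k+1 vertices as a subgraph. Call an edge uv of G with u ∈ X and v ∉ X k-branching out of X if v has at least k neighbours in X. Then the number of edges of G that are k-branching out of X is at most k²·|X|. -/

import Mathlib

open SimpleGraph

/-- `G.ContainsSub H` means `G` contains a copy of `H` as a (not necessarily induced)
subgraph, i.e. there is an injective graph homomorphism from `H` to `G`. -/
def SimpleGraph.ContainsSub {V W : Type*} (G : SimpleGraph V) (H : SimpleGraph W) : Prop :=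
  ∃ f : W → V, Function.Injective f ∧ ∀ a b, H.Adj a b → G.Adj (f a) (f b)

/-- The bipartite subgraph of `G` consisting of exactly those edges with one
endpoint in `S` and the other endpoint in `T`. -/
def SimpleGraph.betweenGraph {V : Type*} (G : SimpleGraph V) (S T : Set V) : SimpleGraph V where
  Adj a b := G.Adj a b ∧ ((a ∈ S ∧ b ∈ T) ∨ (a ∈ T ∧ b ∈ S))
  symm := by
    constructor
    intro a b h
    exact ⟨h.1.symm, h.2.elim (fun hab => Or.inr ⟨hab.2, hab.1⟩) (fun hab => Or.inl ⟨hab.2, hab.1⟩)⟩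
  loopless := by
    constructor
    intro a h
    exact G.loopless.irrefl a h.1

section Aux

variable {V : Type*} [DecidableEq V]

lemma aux_containsSub_of_list {V : Type*} (K : SimpleGraph V) (n : ℕ) (l : List V)
    (hlen : l.length = n) (hnd : l.Nodup) (hch : l.Chain' K.Adj) :
    ∃ f : Fin n → V, Function.Injective f ∧ ∀ a b, (pathGraph n).Adj a b → K.Adj (f a) (f b) := by
  subst hlen
  refine ⟨fun i => l.get i, List.nodup_iff_injective_get.mp hnd, ?_⟩
  intro a b hab
  rw [pathGraph_adj] at hab
  rw [List.Chain', List.isChain_iff_getElem] at hch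
  rcases hab with h | h
  · have hlt : (a : ℕ) < l.length - 1 := by omega
    rw [show b = ⟨(a : ℕ) + 1, by omega⟩ from Fin.ext h.symm]
    exact hch a (by omega)
  · have hlt : (b : ℕ) < l.length - 1 := by omega
    rw [show a = ⟨(b : ℕ) + 1, by omega⟩ from Fin.ext h.symm]
    exact (hch b (by omega)).symm

lemma aux_exists_path (k : ℕ) (hk : 1 ≤ k) (K G : SimpleGraph V) [DecidableRel G.Adj]
    (A B : Finset V) (hdisj : ∀ a ∈ A, a ∉ B)
    (hKG : ∀ x ∈ A, ∀ y ∈ B, G.Adj x y → K.Adj x y)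
    (hA : A.Nonempty)
    (hdegA : ∀ x ∈ A, k + 1 ≤ (B.filter fun y => G.Adj x y).card)
    (hdegB : ∀ y ∈ B, k ≤ (A.filter fun x => G.Adj y x).card) :
    ∃ l : List V, l.length = 2 * k + 1 ∧ l.Nodup ∧ l.Chain' K.Adj := by
  obtain ⟨x₀, hx₀⟩ := hA
  set Inv : ℕ → List V → Prop := fun i r =>
    r.Chain' K.Adj ∧ r.Nodup ∧ r.length = 2 * i ∧
    (r.toFinset ∩ A).card = i ∧ (r.toFinset ∩ B).card = i ∧
    (∃ t, r = t ++ [x₀]) ∧ (∃ b t, r = b :: t ∧ b ∈ B) with hInv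
  have key : ∀ i, 1 ≤ i → i ≤ k → ∃ r, Inv i r := by
    intro i
    induction i with
    | zero => omega
    | succ j ihj =>
      intro _ hjk
      rcases Nat.eq_or_lt_of_le (Nat.one_le_iff_ne_zero.mpr (Nat.succ_ne_zero j)) with h1 | h1
      · have hj0 : j = 0 := by omega
        subst hj0
        have hcard : 0 < (B.filter fun y => G.Adj x₀ y).card := by
          have := hdegA x₀ hx₀; omega
        obtain ⟨y₀, hy₀⟩ := Finset.card_pos.mp hcard
        rw [Finset.mem_filter] at hy₀
        have hyB := hy₀.1
        have hne : y₀ ≠ x₀ := fun h => hdisj x₀ hx₀ (h ▸ hyB)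
        refine ⟨[y₀, x₀], ?_, ?_, ?_, ?_, ?_, ⟨[y₀], rfl⟩, ⟨y₀, [x₀], rfl, hyB⟩⟩
        · exact List.isChain_pair.mpr ((hKG x₀ hx₀ y₀ hyB hy₀.2).symm)
        · simp [hne]
        · rfl
        · have hts : ([y₀, x₀] : List V).toFinset = {y₀, x₀} := by simp
          rw [hts, Finset.insert_inter_of_notMem (fun h => hdisj y₀ h hyB),
            Finset.singleton_inter_of_mem hx₀]
          simp
        · have hts : ([y₀, x₀] : List V).toFinset = {y₀, x₀} := by simp
          rw [hts, Finset.insert_inter_of_mem hyB,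
            Finset.singleton_inter_of_notMem (hdisj x₀ hx₀)]
          simp
      · have hj1 : 1 ≤ j := by omega
        obtain ⟨r, hch, hnd, hlen, hcA, hcB, ⟨t0, ht0⟩, ⟨b, t, hbt, hbB⟩⟩ := ihj hj1 (by omega)
        have hbdeg := hdegB b hbB
        have hlt : (r.toFinset ∩ A).card < (A.filter fun x => G.Adj b x).card := by omega
        have hex : ∃ x ∈ (A.filter fun x => G.Adj b x), x ∉ r.toFinset ∩ A := by
          by_contra hc
          push_neg at hc
          exact absurd (Finset.card_le_card hc) (by omega)
        obtain ⟨x, hxf, hxnot⟩ := hex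
        rw [Finset.mem_filter] at hxf
        have hxA := hxf.1
        have hxr : x ∉ r := fun h => hxnot (Finset.mem_inter.mpr ⟨List.mem_toFinset.mpr h, hxA⟩)
        have hxdeg := hdegA x hxA
        have hlt2 : (r.toFinset ∩ B).card < (B.filter fun y => G.Adj x y).card := by omega
        have hex2 : ∃ y ∈ (B.filter fun y => G.Adj x y), y ∉ r.toFinset ∩ B := by
          by_contra hc
          push_neg at hc
          exact absurd (Finset.card_le_card hc) (by omega)
        obtain ⟨y, hyf, hynot⟩ := hex2
        rw [Finset.mem_filter] at hyf
        have hyB := hyf.1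
        have hyr : y ∉ r := fun h => hynot (Finset.mem_inter.mpr ⟨List.mem_toFinset.mpr h, hyB⟩)
        have hyx : y ≠ x := fun h => hdisj x hxA (h ▸ hyB)
        refine ⟨y :: x :: r, ?_, ?_, ?_, ?_, ?_, ⟨y :: x :: t0, by rw [ht0]; rfl⟩, ⟨y, x :: r, rfl, hyB⟩⟩
        · rw [List.Chain', List.isChain_cons]
          constructor
          · intro z hz
            simp only [List.head?_cons, Option.mem_some_iff] at hz
            subst hz
            exact (hKG x hxA y hyB hyf.2).symm
          · rw [hbt, List.isChain_cons]
            refine ⟨?_, hbt ▸ hch⟩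
            intro z hz
            simp only [List.head?_cons, Option.mem_some_iff] at hz
            subst hz
            exact hKG x hxA b hbB hxf.2.symm
        · simp only [List.nodup_cons]
          exact ⟨by simp [hyx, hyr], hxr, hnd⟩
        · simp [hlen]; ring
        · have hts : (y :: x :: r).toFinset = insert y (insert x r.toFinset) := by simp
          rw [hts, Finset.insert_inter_of_notMem (fun h => hdisj y h hyB),
            Finset.insert_inter_of_mem hxA,
            Finset.card_insert_of_notMem (fun h => hxnot h), hcA]
        · have hts : (y :: x :: r).toFinset = insert y (insert x r.toFinset) := by simp
          rw [hts, Finset.insert_inter_of_mem hyB,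
            Finset.insert_inter_of_notMem (fun h => hdisj x hxA h),
            Finset.card_insert_of_notMem (fun h => hynot h), hcB]
  obtain ⟨r, hch, hnd, hlen, hcA, hcB, ⟨t0, ht0⟩, ⟨b, t, hbt, hbB⟩⟩ := key k hk le_rfl
  by_cases hcase : ∃ x ∈ (A.filter fun x => G.Adj b x), x ∉ r.toFinset
  · obtain ⟨x, hxf, hxr'⟩ := hcase
    rw [Finset.mem_filter] at hxf
    have hxr : x ∉ r := fun h => hxr' (List.mem_toFinset.mpr h)
    refine ⟨x :: r, by simp [hlen], by simp [hxr, hnd], ?_⟩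
    rw [hbt, List.Chain', List.isChain_cons]
    refine ⟨?_, hbt ▸ hch⟩
    intro z hz
    simp only [List.head?_cons, Option.mem_some_iff] at hz
    subst hz
    exact hKG x hxf.1 b hbB hxf.2.symm
  · push_neg at hcase
    have hsub : (A.filter fun x => G.Adj b x) ⊆ r.toFinset ∩ A := by
      intro x hx
      exact Finset.mem_inter.mpr ⟨hcase x hx, (Finset.mem_filter.mp hx).1⟩
    have heq : (A.filter fun x => G.Adj b x) = r.toFinset ∩ A :=
      Finset.eq_of_subset_of_card_le hsub (by rw [hcA]; exact hdegB b hbB)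
    have hx₀r : x₀ ∈ r.toFinset ∩ A := by
      refine Finset.mem_inter.mpr ⟨List.mem_toFinset.mpr ?_, hx₀⟩
      rw [ht0]; simp
    have hadj : G.Adj b x₀ := (Finset.mem_filter.mp (heq ▸ hx₀r)).2
    have hdeg := hdegA x₀ hx₀
    have hlt : (r.toFinset ∩ B).card < (B.filter fun y => G.Adj x₀ y).card := by omega
    have hex : ∃ y ∈ (B.filter fun y => G.Adj x₀ y), y ∉ r.toFinset ∩ B := by
      by_contra hc
      push_neg at hc
      exact absurd (Finset.card_le_card hc) (by omega)
    obtain ⟨y, hyf, hynot⟩ := hex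
    rw [Finset.mem_filter] at hyf
    have hyr : y ∉ r := fun h => hynot (Finset.mem_inter.mpr ⟨List.mem_toFinset.mpr h, hyf.1⟩)
    refine ⟨r ++ [y], by simp [hlen], ?_, ?_⟩
    · rw [List.nodup_append]
      exact ⟨hnd, List.nodup_singleton y, by intro a ha b hb; simp at hb; subst hb; exact fun h => hyr (h ▸ ha)⟩
    · rw [List.Chain', List.isChain_append]
      refine ⟨hch, List.isChain_singleton y, ?_⟩
      intro z hz w hw
      rw [ht0] at hz
      rw [List.getLast?_concat] at hz
      simp only [Option.mem_some_iff] at hz hw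
      simp only [List.head?_cons, Option.mem_some_iff] at hw
      subst hz; subst hw
      exact hKG x₀ hx₀ y hyf.1 hyf.2

lemma aux_main_count (k : ℕ) (hk : 2 ≤ k) (K G : SimpleGraph V) [DecidableRel G.Adj]
    (hP : ∀ A B : Finset V, (∀ a ∈ A, a ∉ B) → (∀ x ∈ A, ∀ y ∈ B, G.Adj x y → K.Adj x y) →
      A.Nonempty → (∀ x ∈ A, k + 1 ≤ (B.filter fun y => G.Adj x y).card) →
      (∀ y ∈ B, k ≤ (A.filter fun x => G.Adj y x).card) → False) :
    ∀ n (A B : Finset V), A.card = n → (∀ a ∈ A, a ∉ B) →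
      (∀ x ∈ A, ∀ y ∈ B, G.Adj x y → K.Adj x y) →
      (∀ y ∈ B, k ≤ (A.filter fun x => G.Adj y x).card) →
      (∑ y ∈ B, (A.filter fun x => G.Adj y x).card) ≤ k ^ 2 * A.card := by
  intro n
  induction n using Nat.strong_induction_on with
  | _ n ih =>
    intro A B hcard hdisj hKG hdegB
    rcases Finset.eq_empty_or_nonempty A with hAe | hAne
    · subst hAe
      have hBe : B = ∅ := by
        rw [Finset.eq_empty_iff_forall_notMem]
        intro y hy
        have := hdegB y hy
        simp at this
        omega
      subst hBe; simp
    · have hex : ∃ x ∈ A, (B.filter fun y => G.Adj x y).card ≤ k := by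
        by_contra hc
        push_neg at hc
        exact hP A B hdisj hKG hAne (fun x hx => hc x hx) hdegB
      obtain ⟨x, hxA, hxdeg⟩ := hex
      set P : V → Prop := fun y => G.Adj y x ∧ (A.filter fun z => G.Adj y z).card ≤ k with hPdef
      have hPdec : DecidablePred P := fun y => instDecidableAnd
      set D := B.filter P with hD
      set B' := B.filter (fun y => ¬ P y) with hB'
      set A' := A.erase x with hA'
      have hA'card : A'.card = n - 1 := by rw [hA', Finset.card_erase_of_mem hxA, hcard]
      have hn1 : 1 ≤ n := by rw [← hcard]; exact Finset.card_pos.mpr hAne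
      have hdisj' : ∀ a ∈ A', a ∉ B' :=
        fun a ha hb => hdisj a (Finset.mem_of_mem_erase ha) (Finset.mem_filter.mp hb).1
      have hKG' : ∀ a ∈ A', ∀ y ∈ B', G.Adj a y → K.Adj a y :=
        fun a ha y hy hadj => hKG a (Finset.mem_of_mem_erase ha) y (Finset.mem_filter.mp hy).1 hadj
      have hdegB' : ∀ y ∈ B', k ≤ (A'.filter fun z => G.Adj y z).card := by
        intro y hy
        rw [hB', Finset.mem_filter] at hy
        obtain ⟨hyB, hyP⟩ := hy
        have hErase : A'.filter (fun z => G.Adj y z) = (A.filter fun z => G.Adj y z).erase x := by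
          rw [hA', Finset.filter_erase]
        rw [hErase]
        by_cases hadj : G.Adj y x
        · have h2 : k + 1 ≤ (A.filter fun z => G.Adj y z).card := by
            by_contra hc
            exact hyP ⟨hadj, by omega⟩
          have h3 : ((A.filter fun z => G.Adj y z).erase x).card
              = (A.filter fun z => G.Adj y z).card - 1 :=
            Finset.card_erase_of_mem (Finset.mem_filter.mpr ⟨hxA, hadj⟩)
          omega
        · rw [Finset.erase_eq_of_notMem (fun h => hadj (Finset.mem_filter.mp h).2)]
          exact hdegB y hyB
      have hIH := ih (n-1) (by omega) A' B' hA'card hdisj' hKG' hdegB'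
      have hsplit : (∑ y ∈ B, (A.filter fun z => G.Adj y z).card)
          = (∑ y ∈ D, (A.filter fun z => G.Adj y z).card)
            + (∑ y ∈ B', (A.filter fun z => G.Adj y z).card) := by
        rw [hD, hB', Finset.sum_filter_add_sum_filter_not]
      have hDbound : (∑ y ∈ D, (A.filter fun z => G.Adj y z).card) ≤ k * D.card := by
        rw [mul_comm]
        apply Finset.sum_le_card_nsmul
        intro y hy
        exact ((Finset.mem_filter.mp hy).2).2
      have hpt : ∀ y ∈ B', (A.filter fun z => G.Adj y z).card
          ≤ (A'.filter fun z => G.Adj y z).card + (if G.Adj y x then 1 else 0) := by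
        intro y _
        have hErase : A'.filter (fun z => G.Adj y z) = (A.filter fun z => G.Adj y z).erase x := by
          rw [hA', Finset.filter_erase]
        rw [hErase]
        by_cases hadj : G.Adj y x
        · have h3 : ((A.filter fun z => G.Adj y z).erase x).card
              = (A.filter fun z => G.Adj y z).card - 1 :=
            Finset.card_erase_of_mem (Finset.mem_filter.mpr ⟨hxA, hadj⟩)
          simp only [hadj, if_true]
          omega
        · rw [Finset.erase_eq_of_notMem (fun h => hadj (Finset.mem_filter.mp h).2)]
          simp [hadj]
      have hB'bound : (∑ y ∈ B', (A.filter fun z => G.Adj y z).card)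
          ≤ (∑ y ∈ B', (A'.filter fun z => G.Adj y z).card)
            + (B'.filter fun y => G.Adj y x).card := by
        calc (∑ y ∈ B', (A.filter fun z => G.Adj y z).card)
            ≤ ∑ y ∈ B', ((A'.filter fun z => G.Adj y z).card + (if G.Adj y x then 1 else 0)) :=
              Finset.sum_le_sum hpt
          _ = (∑ y ∈ B', (A'.filter fun z => G.Adj y z).card)
              + (∑ y ∈ B', (if G.Adj y x then 1 else 0)) := Finset.sum_add_distrib
          _ = _ := by rw [← Finset.card_filter]
      have hsubN : D ∪ (B'.filter fun y => G.Adj y x) ⊆ B.filter (fun y => G.Adj y x) := by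
        intro y hy
        rcases Finset.mem_union.mp hy with h | h
        · rw [hD, Finset.mem_filter] at h
          exact Finset.mem_filter.mpr ⟨h.1, h.2.1⟩
        · rw [Finset.mem_filter, hB', Finset.mem_filter] at h
          exact Finset.mem_filter.mpr ⟨h.1.1, h.2⟩
      have hNx : (B.filter fun y => G.Adj y x).card ≤ k := by
        have heq : (B.filter fun y => G.Adj y x) = (B.filter fun y => G.Adj x y) := by
          apply Finset.filter_congr
          intro y _
          simp [G.adj_comm]
        rw [heq]; exact hxdeg
      have hdisj2 : Disjoint D (B'.filter fun y => G.Adj y x) := by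
        rw [hD, hB']
        exact (Finset.disjoint_filter_filter_not B B P).mono_right (Finset.filter_subset _ _)
      have hcards : D.card + (B'.filter fun y => G.Adj y x).card ≤ k := by
        rw [← Finset.card_union_of_disjoint hdisj2]
        exact le_trans (Finset.card_le_card hsubN) hNx
      have hDk : D.card ≤ k := by omega
      obtain ⟨m, rfl⟩ : ∃ m, k = m + 2 := ⟨k - 2, by omega⟩
      set C := (B'.filter fun y => G.Adj y x).card with hC
      have harith : C + (m+2) * D.card ≤ (m+2)^2 := by
        have h1 : D.card * (m+1) ≤ (m+2) * (m+1) := Nat.mul_le_mul_right _ hDk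
        have e1 : (m+2) * D.card = D.card + D.card * (m+1) := by ring
        have e2 : (m+2)^2 = (m+2) + (m+2) * (m+1) := by ring
        linarith
      calc (∑ y ∈ B, (A.filter fun z => G.Adj y z).card)
          = _ + _ := hsplit
        _ ≤ (m+2) * D.card + ((∑ y ∈ B', (A'.filter fun z => G.Adj y z).card) + C) :=
            Nat.add_le_add hDbound hB'bound
        _ ≤ (m+2) * D.card + ((m+2)^2 * A'.card + C) :=
            Nat.add_le_add_left (Nat.add_le_add_right hIH C) _
        _ = (m+2)^2 * A'.card + (C + (m+2) * D.card) := by ring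
        _ ≤ (m+2)^2 * A'.card + (m+2)^2 := Nat.add_le_add_left harith _
        _ ≤ (m+2)^2 * A.card := by
            rw [hA'card, hcard]
            have e3 : (m+2)^2 * (n-1) + (m+2)^2 = (m+2)^2 * ((n-1) + 1) := by ring
            rw [e3]
            have e4 : n - 1 + 1 = n := by omega
            rw [e4]

end Aux

/-- Lemma 3.1: if the bipartite subgraph of `G` between `X` and its complement is
`P_{2k+1}`-free, then at most `k²|X|` edges are `k`-branching out of `X`. -/
theorem card_branching_le {V : Type*} [Fintype V] [DecidableEq V]
    (k : ℕ) (hk : 2 ≤ k) (G : SimpleGraph V) [DecidableRel G.Adj] (X : Finset V)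
    (hP : ¬ (G.betweenGraph ↑X (↑X)ᶜ).ContainsSub (pathGraph (2 * k + 1))) :
    (G.edgeFinset.filter fun e => ∃ u v, e = s(u, v) ∧ u ∈ X ∧ v ∉ X ∧
      k ≤ (X.filter fun w => G.Adj v w).card).card ≤ k ^ 2 * X.card := by
  classical
  set K := G.betweenGraph ↑X (↑X)ᶜ with hK
  set Y : Finset V := Finset.univ.filter
    (fun v => v ∉ X ∧ k ≤ (X.filter fun w => G.Adj v w).card) with hY
  have hYmem : ∀ v, v ∈ Y ↔ v ∉ X ∧ k ≤ (X.filter fun w => G.Adj v w).card := by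
    intro v
    rw [hY, Finset.mem_filter]
    simp
  -- rewrite the branching-edge set as a biUnion
  have hset : (G.edgeFinset.filter fun e => ∃ u v, e = s(u, v) ∧ u ∈ X ∧ v ∉ X ∧
      k ≤ (X.filter fun w => G.Adj v w).card)
      = Y.biUnion (fun v => (X.filter fun w => G.Adj v w).image (fun u => s(u, v))) := by
    ext e
    constructor
    · intro he
      rw [Finset.mem_filter] at he
      obtain ⟨heE, u, v, rfl, huX, hvX, hdeg⟩ := he
      have hadj : G.Adj u v := (SimpleGraph.mem_edgeFinset.mp heE)
      refine Finset.mem_biUnion.mpr ⟨v, (hYmem v).mpr ⟨hvX, hdeg⟩, ?_⟩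
      exact Finset.mem_image.mpr ⟨u, Finset.mem_filter.mpr ⟨huX, hadj.symm⟩, rfl⟩
    · intro he
      obtain ⟨v, hvY, he'⟩ := Finset.mem_biUnion.mp he
      obtain ⟨u, hu, rfl⟩ := Finset.mem_image.mp he'
      rw [Finset.mem_filter] at hu
      obtain ⟨hvX, hdeg⟩ := (hYmem v).mp hvY
      refine Finset.mem_filter.mpr ⟨SimpleGraph.mem_edgeFinset.mpr hu.2.symm, u, v, rfl, hu.1, hvX, hdeg⟩
  rw [hset]
  have hdisjim : ∀ v₁ ∈ Y, ∀ v₂ ∈ Y, v₁ ≠ v₂ →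
      Disjoint ((X.filter fun w => G.Adj v₁ w).image (fun u => s(u, v₁)))
               ((X.filter fun w => G.Adj v₂ w).image (fun u => s(u, v₂))) := by
    intro v₁ h₁ v₂ h₂ hne
    rw [Finset.disjoint_left]
    intro e he1 he2
    obtain ⟨u₁, hu₁, he₁⟩ := Finset.mem_image.mp he1
    obtain ⟨u₂, hu₂, he₂⟩ := Finset.mem_image.mp he2
    have : s(u₁, v₁) = s(u₂, v₂) := by rw [he₁, he₂]
    rw [Sym2.eq_iff] at this
    rcases this with ⟨h, h'⟩ | ⟨h, h'⟩
    · exact hne h'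
    · have hv₂ : v₂ ∉ X := ((hYmem v₂).mp h₂).1
      exact hv₂ (h ▸ (Finset.mem_filter.mp hu₁).1)
  rw [Finset.card_biUnion hdisjim]
  have himcard : ∀ v ∈ Y, ((X.filter fun w => G.Adj v w).image (fun u => s(u, v))).card
      = (X.filter fun w => G.Adj v w).card := by
    intro v hv
    apply Finset.card_image_of_injOn
    intro u₁ hu₁ u₂ hu₂ heq
    rw [Sym2.eq_iff] at heq
    rcases heq with ⟨h, _⟩ | ⟨h, h'⟩
    · exact h
    · exfalso
      exact ((hYmem v).mp hv).1 (h' ▸ (Finset.mem_filter.mp hu₂).1)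
  rw [Finset.sum_congr rfl himcard]
  -- apply the main counting lemma
  have hPfun : ∀ A B : Finset V, (∀ a ∈ A, a ∉ B) →
      (∀ x ∈ A, ∀ y ∈ B, G.Adj x y → K.Adj x y) →
      A.Nonempty → (∀ x ∈ A, k + 1 ≤ (B.filter fun y => G.Adj x y).card) →
      (∀ y ∈ B, k ≤ (A.filter fun x => G.Adj y x).card) → False := by
    intro A B h1 h2 h3 h4 h5
    obtain ⟨l, hlen, hnd, hch⟩ := aux_exists_path k (by omega) K G A B h1 h2 h3 h4 h5
    exact hP (aux_containsSub_of_list K (2 * k + 1) l hlen hnd hch)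
  refine aux_main_count k hk K G hPfun X.card X Y rfl ?_ ?_ ?_
  · intro a ha hb
    exact ((hYmem a).mp hb).1 ha
  · intro x hx y hy hadj
    refine ⟨hadj, Or.inl ⟨hx, ?_⟩⟩
    simpa using ((hYmem y).mp hy).1
  · intro y hy
    exact ((hYmem y).mp hy).2
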